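/- arXiv:1906.12334 — 2 statements merged into one kernel-verified Lean document; each statement's English description precedes it below -/
import Mathlib

section
/- Let G = (V, E) be a finite simple undirected graph, let k ∈ ℕ, and let e = (u, v) be an edge joining two non-adjacent vertices of G. If V(C_k(G + e)) ≠ V(C_k(G)), then both endpoints u and v belong to V(C_k(G + e)). -/
open SimpleGraph

variable {V : Type*}

/-- The vertex set of the `k`-core of `G`: the largest set `S` such that every
vertex of `S` has at least `k` neighbors in `S` (realized as the union of all
such sets). -/
def coreSet (G : SimpleGraph V) (k : ℕ) : Set V :=
  {u | ∃ S : Set V, u ∈ S ∧ ∀ v ∈ S, k ≤ (S ∩ G.neighborSet v).ncard}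

/-- The followers of a set `A` of anchor edges: vertices of the `k`-core of `G + A`
that are not in the `k`-core of `G`. -/
def followers (G : SimpleGraph V) (k : ℕ) (A : Set (Sym2 V)) : Set V :=
  coreSet (G ⊔ SimpleGraph.fromEdgeSet A) k \ coreSet G k

lemma coreSet_mono [Fintype V] {G H : SimpleGraph V} (h : G ≤ H) (k : ℕ) :
    coreSet G k ⊆ coreSet H k := by
  rintro x ⟨S, hx, hS⟩
  refine ⟨S, hx, fun w hw => (hS w hw).trans (Set.ncard_le_ncard ?_ (Set.toFinite _))⟩
  exact Set.inter_subset_inter_right _ (fun y hy => h hy)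

lemma coreSet_self [Fintype V] (G : SimpleGraph V) (k : ℕ) :
    ∀ w ∈ coreSet G k, k ≤ (coreSet G k ∩ G.neighborSet w).ncard := by
  rintro w ⟨S, hw, hS⟩
  refine (hS w hw).trans (Set.ncard_le_ncard ?_ (Set.toFinite _))
  exact Set.inter_subset_inter_left _ (fun y hy => ⟨S, hy, hS⟩)

lemma key [Fintype V] (G : SimpleGraph V) (k : ℕ) (u v : V)
    (hu : u ∉ coreSet (G ⊔ SimpleGraph.fromEdgeSet {s(u, v)}) k) :
    coreSet (G ⊔ SimpleGraph.fromEdgeSet {s(u, v)}) k = coreSet G k := by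
  set G' := G ⊔ SimpleGraph.fromEdgeSet {s(u, v)} with hG'
  refine Set.Subset.antisymm ?_ (coreSet_mono le_sup_left k)
  intro x hx
  refine ⟨coreSet G' k, hx, fun w hw => ?_⟩
  have heq : coreSet G' k ∩ G'.neighborSet w = coreSet G' k ∩ G.neighborSet w := by
    ext y
    constructor
    · rintro ⟨hyC, hyN⟩
      rcases hyN with h | h
      · exact ⟨hyC, h⟩
      · exfalso
        rcases h with ⟨hmem, hne⟩
        rcases Sym2.eq_iff.mp hmem with ⟨rfl, rfl⟩ | ⟨rfl, rfl⟩
        · exact hu hw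
        · exact hu hyC
    · rintro ⟨hyC, hyN⟩
      exact ⟨hyC, Or.inl hyN⟩
  rw [← heq]
  exact coreSet_self G' k w hw

/-- If adding the edge `e = (u, v)` between two non-adjacent vertices of `G` changes
the vertex set of the `k`-core, then both endpoints `u` and `v` belong to the
`k`-core of `G + e`. -/
theorem stmt_1 [Fintype V] (G : SimpleGraph V) (k : ℕ)
    (u v : V) (huv : u ≠ v) (hadj : ¬ G.Adj u v)
    (hne : coreSet (G ⊔ SimpleGraph.fromEdgeSet {s(u, v)}) k ≠ coreSet G k) :
    u ∈ coreSet (G ⊔ SimpleGraph.fromEdgeSet {s(u, v)}) k ∧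
      v ∈ coreSet (G ⊔ SimpleGraph.fromEdgeSet {s(u, v)}) k := by
  constructor
  · by_contra hu
    exact hne (key G k u v hu)
  · by_contra hv
    rw [Sym2.eq_swap] at hne hv
    exact hne (key G k v u hv)
end

section
/- Let G = (V, E) be a finite simple undirected graph, let k ∈ ℕ, and let e₁ = (u₁, v₁) be an anchor edge joining two non-adjacent vertices of G with follower set F({e₁}, G). Then for every candidate edge e = (u, v) with u ∈ F({e₁}, G), v ∈ F({e₁}, G) ∪ V(C_k(G)), u ≠ v, and u, v non-adjacent in G, we have F({e}, G) ⊆ F({e₁}, G). -/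
open SimpleGraph

variable {V : Type*}

lemma coreSet_good [Fintype V] (G : SimpleGraph V) (k : ℕ) :
    ∀ v ∈ coreSet G k, k ≤ (coreSet G k ∩ G.neighborSet v).ncard := by
  rintro v ⟨S, hvS, hS⟩
  have hsub : S ⊆ coreSet G k := fun x hx => ⟨S, hx, hS⟩
  exact le_trans (hS v hvS)
    (Set.ncard_le_ncard (Set.inter_subset_inter_left _ hsub) (Set.toFinite _))

/-- Given an anchor edge `e₁ = (u₁, v₁)` joining two non-adjacent vertices of `G`,
for every candidate edge `e = (u, v)` with `u` a follower of `e₁`, `v` a follower of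
`e₁` or a `k`-core vertex of `G`, `u ≠ v`, and `u, v` non-adjacent in `G`, the
followers of `e` are contained in the followers of `e₁`. -/
theorem stmt_4 [Fintype V] (G : SimpleGraph V) (k : ℕ)
    (u₁ v₁ : V) (hu₁v₁ : u₁ ≠ v₁) (hadj₁ : ¬ G.Adj u₁ v₁) :
    ∀ u v : V, u ∈ followers G k {s(u₁, v₁)} →
      v ∈ followers G k {s(u₁, v₁)} ∪ coreSet G k →
      u ≠ v → ¬ G.Adj u v →
      followers G k {s(u, v)} ⊆ followers G k {s(u₁, v₁)} := by
  intro u v hu hv huv hadj x hx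
  set E1 := G ⊔ fromEdgeSet {s(u₁, v₁)} with hE1
  have hGle : G ≤ E1 := le_sup_left
  have hu' : u ∈ coreSet E1 k := hu.1
  have hv' : v ∈ coreSet E1 k := by
    rcases hv with h | h
    · exact h.1
    · exact coreSet_mono hGle k h
  obtain ⟨hx1, hx2⟩ := hx
  refine ⟨?_, hx2⟩
  obtain ⟨S, hxS, hS⟩ := hx1
  refine ⟨S ∪ coreSet E1 k, Or.inl hxS, ?_⟩
  intro w hw
  have hcore : ∀ z ∈ coreSet E1 k, k ≤ ((S ∪ coreSet E1 k) ∩ E1.neighborSet z).ncard := by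
    intro z hz
    exact le_trans (coreSet_good E1 k z hz)
      (Set.ncard_le_ncard (Set.inter_subset_inter_left _ Set.subset_union_right)
        (Set.toFinite _))
  rcases hw with hwS | hwc
  · by_cases hwu : w = u
    · exact hcore w (hwu ▸ hu')
    by_cases hwv : w = v
    · exact hcore w (hwv ▸ hv')
    refine le_trans (hS w hwS) (Set.ncard_le_ncard ?_ (Set.toFinite _))
    rintro y ⟨hyS, hy⟩
    refine ⟨Or.inl hyS, ?_⟩
    rw [mem_neighborSet, sup_adj, fromEdgeSet_adj] at hy
    rcases hy with hG | ⟨hmem, hne⟩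
    · exact hGle hG
    · exfalso
      rw [Set.mem_singleton_iff, Sym2.eq_iff] at hmem
      rcases hmem with ⟨h1, h2⟩ | ⟨h1, h2⟩
      · exact hwu h1
      · exact hwv h1
  · exact hcore w hwc
end
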